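/- Let α ∈ [0, π/2), let A ∈ M_n(ℂ) be a sector matrix of angle α with 0 < m·I_n ≤ Re A ≤ M·I_n for some 0 < m ≤ M, and set h = M/m. Then for every normalized positive linear map Φ : M_n(ℂ) → M_l(ℂ), one has Φ((Re A)^{-1}) ≤ sec²(α)·K(h)^{1/2}·Φ(Re(A^{-1})) in the Loewner order. -/

import Mathlib

open Matrix
open scoped ComplexOrder

/-- The real (Hermitian) part of a complex matrix: `Re A = (A + Aᴴ)/2`. -/
noncomputable def matRe {n : ℕ} (A : Matrix (Fin n) (Fin n) ℂ) : Matrix (Fin n) (Fin n) ℂ :=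
  (2⁻¹ : ℂ) • (A + Aᴴ)

/-- `A` is a sector matrix of angle `α`: its numerical range is contained in
`S_α = {z : Re z > 0, |Im z| ≤ tan α · Re z}`. -/
def InSector {n : ℕ} (α : ℝ) (A : Matrix (Fin n) (Fin n) ℂ) : Prop :=
  ∀ x : Fin n → ℂ, star x ⬝ᵥ x = 1 →
    0 < (star x ⬝ᵥ A *ᵥ x).re ∧
      |(star x ⬝ᵥ A *ᵥ x).im| ≤ Real.tan α * (star x ⬝ᵥ A *ᵥ x).re

/-- The Kantorovich constant `K(x) = (x+1)²/(4x)`. -/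
noncomputable def kant (x : ℝ) : ℝ := (x + 1) ^ 2 / (4 * x)

noncomputable def matIm {n : ℕ} (A : Matrix (Fin n) (Fin n) ℂ) : Matrix (Fin n) (Fin n) ℂ :=
  (-(Complex.I) * 2⁻¹) • (A - Aᴴ)

lemma matRe_herm {n : ℕ} (A : Matrix (Fin n) (Fin n) ℂ) : (matRe A).IsHermitian := by
  unfold matRe Matrix.IsHermitian
  rw [conjTranspose_smul, conjTranspose_add, conjTranspose_conjTranspose]
  simp [add_comm]

lemma matIm_herm {n : ℕ} (A : Matrix (Fin n) (Fin n) ℂ) : (matIm A).IsHermitian := by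
  unfold matIm Matrix.IsHermitian
  rw [conjTranspose_smul, conjTranspose_sub, conjTranspose_conjTranspose]
  rw [show star (-(Complex.I) * 2⁻¹) = Complex.I * 2⁻¹ by simp]
  ext i j
  simp [Matrix.sub_apply]
  ring

lemma matRe_decomp {n : ℕ} (A : Matrix (Fin n) (Fin n) ℂ) :
    A = matRe A + Complex.I • matIm A := by
  unfold matRe matIm
  rw [smul_smul]
  ext i j
  simp [Matrix.add_apply, Matrix.sub_apply]
  ring_nf
  simp [Complex.I_sq]
  ring

lemma quad_conj {n : ℕ} (A : Matrix (Fin n) (Fin n) ℂ) (x : Fin n → ℂ) :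
    star x ⬝ᵥ Aᴴ *ᵥ x = star (star x ⬝ᵥ A *ᵥ x) := by
  rw [← star_dotProduct (A *ᵥ x) x, star_mulVec, ← dotProduct_mulVec]

lemma quad_re {n : ℕ} (A : Matrix (Fin n) (Fin n) ℂ) (x : Fin n → ℂ) :
    star x ⬝ᵥ (matRe A) *ᵥ x = (((star x ⬝ᵥ A *ᵥ x).re : ℝ) : ℂ) := by
  unfold matRe
  rw [smul_mulVec, dotProduct_smul, add_mulVec, dotProduct_add, quad_conj]
  rw [show star (star x ⬝ᵥ A *ᵥ x) = (starRingEnd ℂ) (star x ⬝ᵥ A *ᵥ x) from rfl]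
  rw [Complex.add_conj]
  push_cast
  rw [smul_eq_mul]
  ring

lemma quad_im {n : ℕ} (A : Matrix (Fin n) (Fin n) ℂ) (x : Fin n → ℂ) :
    star x ⬝ᵥ (matIm A) *ᵥ x = (((star x ⬝ᵥ A *ᵥ x).im : ℝ) : ℂ) := by
  unfold matIm
  rw [smul_mulVec, dotProduct_smul, sub_mulVec, dotProduct_sub, quad_conj]
  rw [show star (star x ⬝ᵥ A *ᵥ x) = (starRingEnd ℂ) (star x ⬝ᵥ A *ᵥ x) from rfl]
  rw [Complex.sub_conj]
  push_cast
  rw [smul_eq_mul]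
  ring_nf
  rw [Complex.I_sq]
  ring

lemma smul_psd {n : ℕ} {c : ℝ} (hc : 0 ≤ c) {M : Matrix (Fin n) (Fin n) ℂ}
    (hM : M.PosSemidef) : (((c : ℝ) : ℂ) • M).PosSemidef := by
  refine PosSemidef.of_dotProduct_mulVec_nonneg ?_ ?_
  · unfold Matrix.IsHermitian
    rw [conjTranspose_smul, hM.1.eq]
    norm_num
  · intro x
    rw [smul_mulVec, dotProduct_smul, smul_eq_mul]
    exact mul_nonneg (by exact_mod_cast Complex.zero_le_real.mpr hc) (hM.dotProduct_mulVec_nonneg x)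

lemma sector_all {n : ℕ} {α : ℝ} {A : Matrix (Fin n) (Fin n) ℂ}
    (hA : InSector α A) (x : Fin n → ℂ) :
    |(star x ⬝ᵥ A *ᵥ x).im| ≤ Real.tan α * (star x ⬝ᵥ A *ᵥ x).re := by
  by_cases hx : x = 0
  · simp [hx]
  · have hpos : 0 < star x ⬝ᵥ x := dotProduct_star_self_pos_iff.mpr hx
    obtain ⟨hr, him⟩ := Complex.lt_def.mp hpos
    simp only [Complex.zero_re, Complex.zero_im] at hr him
    set r : ℝ := (star x ⬝ᵥ x).re with hrdef
    have hxx : star x ⬝ᵥ x = (r : ℂ) := by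
      apply Complex.ext <;> simp [him.symm, hrdef]
    set a : ℝ := (Real.sqrt r)⁻¹ with hadef
    have hsq : a ^ 2 * r = 1 := by
      rw [hadef, ← Real.sqrt_inv]
      rw [Real.sq_sqrt (by positivity)]
      field_simp
    have ha2 : (0:ℝ) < a ^ 2 := by
      nlinarith
    set u : Fin n → ℂ := ((a : ℝ) : ℂ) • x with hudef
    have hstaru : star u = ((a : ℝ) : ℂ) • star x := by
      rw [hudef, star_smul, Complex.star_def, Complex.conj_ofReal]
    have hq : ∀ B : Matrix (Fin n) (Fin n) ℂ,
        star u ⬝ᵥ B *ᵥ u = ((a^2 : ℝ) : ℂ) * (star x ⬝ᵥ B *ᵥ x) := by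
      intro B
      rw [hudef, hstaru, mulVec_smul, dotProduct_smul, smul_dotProduct]
      push_cast
      rw [smul_eq_mul, smul_eq_mul]
      ring
    have huu : star u ⬝ᵥ u = 1 := by
      rw [hudef, hstaru, dotProduct_smul, smul_dotProduct, hxx]
      rw [smul_eq_mul, smul_eq_mul]
      push_cast
      rw [← Complex.ofReal_mul, ← Complex.ofReal_mul]
      rw [show a * (a * r) = a^2 * r by ring, hsq]
      norm_num
    obtain ⟨-, hbound⟩ := hA u huu
    rw [hq A] at hbound
    rw [Complex.re_ofReal_mul] at hbound
    have him2 : (((a^2 : ℝ) : ℂ) * (star x ⬝ᵥ A *ᵥ x)).im = a^2 * (star x ⬝ᵥ A *ᵥ x).im := by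
      exact Complex.im_ofReal_mul _ _
    rw [him2, abs_mul, abs_of_pos ha2] at hbound
    calc |(star x ⬝ᵥ A *ᵥ x).im| = (a^2)⁻¹ * (a^2 * |(star x ⬝ᵥ A *ᵥ x).im|) := by
          rw [inv_mul_cancel_left₀ ha2.ne']
      _ ≤ (a^2)⁻¹ * (Real.tan α * (a^2 * (star x ⬝ᵥ A *ᵥ x).re)) := by
          apply mul_le_mul_of_nonneg_left _ (by positivity)
          linarith [hbound]
      _ = Real.tan α * (star x ⬝ᵥ A *ᵥ x).re := by rw [inv_mul_eq_iff_eq_mul₀ ha2.ne']; ring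

lemma matRe_posDef {n : ℕ} {A : Matrix (Fin n) (Fin n) ℂ} {m : ℝ} (hm : 0 < m)
    (h1 : (matRe A - m • 1).PosSemidef) : (matRe A).PosDef := by
  refine PosDef.of_dotProduct_mulVec_pos (matRe_herm A) fun x hx => ?_
  have h := h1.dotProduct_mulVec_nonneg x
  rw [sub_mulVec, dotProduct_sub, sub_nonneg] at h
  refine lt_of_lt_of_le ?_ h
  rw [smul_mulVec, one_mulVec, dotProduct_smul]
  have hpos : 0 < star x ⬝ᵥ x := dotProduct_star_self_pos_iff.mpr hx
  rw [Complex.real_smul]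
  exact mul_pos (by exact_mod_cast Complex.zero_lt_real.mpr hm) hpos

lemma isUnit_det_of_matRe_posDef {n : ℕ} {A : Matrix (Fin n) (Fin n) ℂ}
    (hR : (matRe A).PosDef) : IsUnit A.det := by
  rw [isUnit_iff_ne_zero]
  intro hdet
  obtain ⟨v, hv, hAv⟩ := (Matrix.exists_mulVec_eq_zero_iff).mpr hdet
  have hq : star v ⬝ᵥ matRe A *ᵥ v = 0 := by
    unfold matRe
    rw [smul_mulVec, dotProduct_smul, add_mulVec, dotProduct_add, quad_conj, hAv]
    simp
  have := hR.dotProduct_mulVec_pos hv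
  rw [hq] at this
  exact lt_irrefl _ this

lemma herm_smul_real {n : ℕ} (t : ℝ) {B : Matrix (Fin n) (Fin n) ℂ} (hB : B.IsHermitian) :
    (((t:ℝ):ℂ) • B).IsHermitian := by
  unfold Matrix.IsHermitian
  rw [conjTranspose_smul, hB.eq]
  norm_num

lemma key_lemma {n : ℕ} {R T : Matrix (Fin n) (Fin n) ℂ} (hR : R.PosDef)
    {t : ℝ} (ht : 0 ≤ t)
    (hD : (((t:ℝ):ℂ) • R - T).PosSemidef) (hE : (((t:ℝ):ℂ) • R + T).PosSemidef) :
    ((((t:ℝ):ℂ)^2 • R) - T * R⁻¹ * T).PosSemidef := by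
  have hdet : IsUnit R.det := (Matrix.isUnit_iff_isUnit_det R).mp hR.isUnit
  have hWR : R⁻¹ * R = 1 := nonsing_inv_mul R hdet
  have hRW : R * R⁻¹ = 1 := mul_nonsing_inv R hdet
  have hWH : (R⁻¹)ᴴ = R⁻¹ := by rw [conjTranspose_nonsing_inv, hR.isHermitian.eq]
  have hRH2 : ((((t:ℝ):ℂ) • R))ᴴ = ((t:ℝ):ℂ) • R := by
    rw [conjTranspose_smul, hR.isHermitian.eq]
    norm_num
  have hTH : Tᴴ = T := by
    have h2 := hE.isHermitian.eq
    rw [conjTranspose_add, hRH2] at h2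
    exact add_left_cancel h2
  rcases eq_or_lt_of_le ht with ht0 | htpos
  · -- t = 0 : T is psd and -T is psd, hence T = 0
    have hT0 : T = 0 := by
      have hTpsd : T.PosSemidef := by simpa [← ht0] using hE
      have hTnsd : (-T).PosSemidef := by simpa [← ht0] using hD
      ext i j
      have hcol : ∀ x, T *ᵥ x = 0 := by
        intro x
        rw [← hTpsd.dotProduct_mulVec_zero_iff x]
        have a1 := hTpsd.dotProduct_mulVec_nonneg x
        have a2 := hTnsd.dotProduct_mulVec_nonneg x
        rw [neg_mulVec, dotProduct_neg] at a2
        exact le_antisymm (neg_nonneg.mp a2) a1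
      have := congrFun (hcol (Pi.single j 1)) i
      simpa [mulVec_single] using this
    simp only [hT0, ← ht0, Complex.ofReal_zero, Matrix.mul_zero, Matrix.zero_mul, sub_zero,
      ne_eq, OfNat.ofNat_ne_zero, not_false_eq_true, zero_pow, zero_smul]
    exact Matrix.PosSemidef.zero
  · -- t > 0
    have htC : ((t:ℝ):ℂ) ≠ 0 := by exact_mod_cast (Complex.ofReal_ne_zero).mpr htpos.ne'
    set W := R⁻¹ with hW
    set s : ℂ := ((t:ℝ):ℂ)⁻¹ with hs
    set B : Matrix (Fin n) (Fin n) ℂ := 1 - s • (W * T) with hB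
    set C : Matrix (Fin n) (Fin n) ℂ := 1 + s • (W * T) with hC
    have hBH : Bᴴ = 1 - s • (T * W) := by
      rw [hB, conjTranspose_sub, conjTranspose_smul, conjTranspose_one, conjTranspose_mul,
        hWH, hTH, hs]
      norm_num
    have hCH : Cᴴ = 1 + s • (T * W) := by
      rw [hC, conjTranspose_add, conjTranspose_smul, conjTranspose_one, conjTranspose_mul,
        hWH, hTH, hs]
      norm_num
    have hWRW : ∀ X : Matrix (Fin n) (Fin n) ℂ, W * (R * X) = X := by
      intro X; rw [← Matrix.mul_assoc, hWR, Matrix.one_mul]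
    have hRWX : ∀ X : Matrix (Fin n) (Fin n) ℂ, R * (W * X) = X := by
      intro X; rw [← Matrix.mul_assoc, hRW, Matrix.one_mul]
    have hiden : (((t:ℝ):ℂ)^2 • R) - T * R⁻¹ * T
        = (((t/2 : ℝ)):ℂ) • (Bᴴ * ((((t:ℝ):ℂ) • R + T)) * B + Cᴴ * ((((t:ℝ):ℂ) • R - T)) * C) := by
      rw [hBH, hCH, hB, hC]
      push_cast
      simp only [Matrix.mul_add, Matrix.add_mul, Matrix.mul_sub, Matrix.sub_mul,
        Matrix.smul_mul, Matrix.mul_smul, Matrix.one_mul, Matrix.mul_one,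
        smul_add, smul_sub, smul_smul, Matrix.mul_assoc, hWRW, hRWX, hWR, hRW]
      match_scalars <;> (try simp only [hs]) <;> (try field_simp) <;> (try ring)
    rw [hiden]
    exact smul_psd (by positivity)
      ((hE.conjTranspose_mul_mul_same B).add (hD.conjTranspose_mul_mul_same C))

lemma sector_D {n : ℕ} {α : ℝ} {A : Matrix (Fin n) (Fin n) ℂ} (hA : InSector α A) :
    ((((Real.tan α : ℝ)):ℂ) • matRe A - matIm A).PosSemidef := by
  refine PosSemidef.of_dotProduct_mulVec_nonneg ((herm_smul_real _ (matRe_herm A)).sub (matIm_herm A)) fun x => ?_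
  rw [sub_mulVec, dotProduct_sub, smul_mulVec, dotProduct_smul, quad_re, quad_im,
    smul_eq_mul, ← Complex.ofReal_mul, ← Complex.ofReal_sub]
  rw [Complex.zero_le_real]
  have := abs_le.mp (sector_all hA x)
  linarith [this.2]

lemma sector_E {n : ℕ} {α : ℝ} {A : Matrix (Fin n) (Fin n) ℂ} (hA : InSector α A) :
    ((((Real.tan α : ℝ)):ℂ) • matRe A + matIm A).PosSemidef := by
  refine PosSemidef.of_dotProduct_mulVec_nonneg ((herm_smul_real _ (matRe_herm A)).add (matIm_herm A)) fun x => ?_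
  rw [add_mulVec, dotProduct_add, smul_mulVec, dotProduct_smul, quad_re, quad_im,
    smul_eq_mul, ← Complex.ofReal_mul, ← Complex.ofReal_add]
  rw [Complex.zero_le_real]
  have := abs_le.mp (sector_all hA x)
  linarith [this.1]

/-- main -/
theorem stmt13 {n l : ℕ} {α : ℝ} (hα : α ∈ Set.Ico 0 (Real.pi / 2))
    {A : Matrix (Fin n) (Fin n) ℂ} (hA : InSector α A)
    {m M : ℝ} (hm : 0 < m) (hmM : m ≤ M)
    (h1 : (matRe A - m • 1).PosSemidef)
    (h2 : (M • (1 : Matrix (Fin n) (Fin n) ℂ) - matRe A).PosSemidef)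
    (Φ : Matrix (Fin n) (Fin n) ℂ →ₗ[ℂ] Matrix (Fin l) (Fin l) ℂ)
    (hΦpos : ∀ X : Matrix (Fin n) (Fin n) ℂ, X.PosSemidef → (Φ X).PosSemidef)
    (hΦ1 : Φ 1 = 1) :
    (((Real.cos α)⁻¹ ^ 2 * Real.sqrt (kant (M / m))) • Φ (matRe A⁻¹) -
      Φ ((matRe A)⁻¹)).PosSemidef := by
  obtain ⟨hα0, hα2⟩ := hα
  set t : ℝ := Real.tan α with htdef
  have hco : 0 < Real.cos α :=
    Real.cos_pos_of_mem_Ioo ⟨by linarith [Real.pi_pos], hα2⟩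
  have ht : 0 ≤ t := Real.tan_nonneg_of_nonneg_of_le_pi_div_two hα0 hα2.le
  set R : Matrix (Fin n) (Fin n) ℂ := matRe A with hRdef
  set T : Matrix (Fin n) (Fin n) ℂ := matIm A with hTdef
  have hRpd : R.PosDef := matRe_posDef hm h1
  have key : ((((t:ℝ):ℂ)^2 • R) - T * R⁻¹ * T).PosSemidef :=
    key_lemma hRpd ht (sector_D hA) (sector_E hA)
  have hAdet : IsUnit A.det := isUnit_det_of_matRe_posDef hRpd
  have hAHdet : IsUnit Aᴴ.det := by
    rw [Matrix.det_conjTranspose]; exact hAdet.star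
  have hRdet : IsUnit R.det := (Matrix.isUnit_iff_isUnit_det R).mp hRpd.isUnit
  have hWR : R⁻¹ * R = 1 := nonsing_inv_mul R hRdet
  have hRW : R * R⁻¹ = 1 := mul_nonsing_inv R hRdet
  have hWRW : ∀ X : Matrix (Fin n) (Fin n) ℂ, R⁻¹ * (R * X) = X := by
    intro X; rw [← Matrix.mul_assoc, hWR, Matrix.one_mul]
  have hRWX : ∀ X : Matrix (Fin n) (Fin n) ℂ, R * (R⁻¹ * X) = X := by
    intro X; rw [← Matrix.mul_assoc, hRW, Matrix.one_mul]
  have hAH : Aᴴ = R - Complex.I • T := by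
    have := congrArg Matrix.conjTranspose (matRe_decomp A)
    rw [conjTranspose_add, conjTranspose_smul, (matRe_herm A).eq, (matIm_herm A).eq,
      Complex.star_def, Complex.conj_I, neg_smul, ← sub_eq_add_neg] at this
    exact this
  have hexp : Aᴴ * R⁻¹ * A = R + T * R⁻¹ * T := by
    nth_rewrite 2 [matRe_decomp A]
    rw [← hRdef, ← hTdef]
    rw [hAH]
    simp only [Matrix.mul_add, Matrix.add_mul, Matrix.mul_sub, Matrix.sub_mul,
      Matrix.smul_mul, Matrix.mul_smul, Matrix.mul_assoc, hWRW, hRWX, hWR, hRW,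
      Matrix.mul_one, Matrix.one_mul, smul_smul]
    match_scalars <;> simp [Complex.I_mul_I] <;> try ring
  have hM0 : ((((1 + t^2 : ℝ)):ℂ) • R - Aᴴ * R⁻¹ * A).PosSemidef := by
    have heq : (((1 + t^2 : ℝ)):ℂ) • R - Aᴴ * R⁻¹ * A = (((t:ℝ):ℂ)^2 • R) - T * R⁻¹ * T := by
      rw [hexp]
      push_cast
      module
    rw [heq]
    exact key
  have hAHi : (A⁻¹)ᴴ = (Aᴴ)⁻¹ := conjTranspose_nonsing_inv A
  have hre_inv : (A⁻¹)ᴴ * R * A⁻¹ = matRe A⁻¹ := by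
    rw [hAHi, hRdef]
    unfold matRe
    rw [Matrix.mul_smul, Matrix.smul_mul, Matrix.mul_add, Matrix.add_mul]
    rw [Matrix.mul_assoc (Aᴴ)⁻¹ A A⁻¹, mul_nonsing_inv A hAdet, Matrix.mul_one]
    rw [nonsing_inv_mul Aᴴ hAHdet, Matrix.one_mul, ← hAHi]
    rw [add_comm]
  have hcancel : (A⁻¹)ᴴ * (Aᴴ * R⁻¹ * A) * A⁻¹ = R⁻¹ := by
    rw [hAHi, ← Matrix.mul_assoc, ← Matrix.mul_assoc, nonsing_inv_mul Aᴴ hAHdet,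
      Matrix.one_mul, Matrix.mul_assoc, mul_nonsing_inv A hAdet, Matrix.mul_one]
  have hP1 : ((((1 + t^2 : ℝ)):ℂ) • matRe A⁻¹ - R⁻¹).PosSemidef := by
    have h := hM0.conjTranspose_mul_mul_same A⁻¹
    have heq : (A⁻¹)ᴴ * ((((1 + t^2 : ℝ)):ℂ) • R - Aᴴ * R⁻¹ * A) * A⁻¹
        = (((1 + t^2 : ℝ)):ℂ) • matRe A⁻¹ - R⁻¹ := by
      rw [Matrix.mul_sub, Matrix.sub_mul, Matrix.mul_smul, Matrix.smul_mul, hre_inv, hcancel]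
    rwa [heq] at h
  -- positivity of Φ (matRe A⁻¹)
  have hReInvPsd : (matRe A⁻¹).PosSemidef := by
    rw [← hre_inv]
    exact hRpd.posSemidef.conjTranspose_mul_mul_same A⁻¹
  have hP : (Φ (matRe A⁻¹)).PosSemidef := hΦpos _ hReInvPsd
  -- scalars
  have hsec : (Real.cos α)⁻¹ ^ 2 = 1 + t^2 := by
    rw [inv_pow, ← Real.inv_one_add_tan_sq hco.ne', inv_inv]
  have hh1 : 1 ≤ M / m := (one_le_div hm).mpr hmM
  have hK1 : 1 ≤ Real.sqrt (kant (M / m)) := by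
    rw [Real.one_le_sqrt]
    unfold kant
    rw [le_div_iff₀ (by positivity)]
    nlinarith
  set s : ℝ := 1 + t^2 with hsdef
  have hs0 : 0 < s := by positivity
  set c : ℝ := (Real.cos α)⁻¹ ^ 2 * Real.sqrt (kant (M / m)) with hcdef
  have hcs : s ≤ c := by
    rw [hcdef, hsec]
    nlinarith
  -- second piece
  have hpiece2 : (((s:ℝ):ℂ) • Φ (matRe A⁻¹) - Φ (R⁻¹)).PosSemidef := by
    have := hΦpos _ hP1
    rwa [map_sub, _root_.map_smul] at this
  have hpiece1 : ((((c - s : ℝ)):ℂ) • Φ (matRe A⁻¹)).PosSemidef :=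
    smul_psd (sub_nonneg.mpr hcs) hP
  have hsum := hpiece1.add hpiece2
  have hfinal : (((c - s : ℝ)):ℂ) • Φ (matRe A⁻¹)
      + ((((s:ℝ)):ℂ) • Φ (matRe A⁻¹) - Φ (R⁻¹))
      = c • Φ (matRe A⁻¹) - Φ (R⁻¹) := by
    have hbr : (c : ℝ) • Φ (matRe A⁻¹) = (((c:ℝ)):ℂ) • Φ (matRe A⁻¹) := by
      ext i j
      simp [Matrix.smul_apply, Complex.real_smul]
    rw [hbr]
    push_cast
    module
  rw [← hfinal]
  exact hsum
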